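/- Let k = ℝ and α, β < 0. If |q| > 2√(αβ) then C_q ≅ M₂(ℝ), and if |q| < 2√(αβ) then C_q ≅ ℍ, the real quaternion algebra. -/

import Mathlib

open FreeAlgebra

/-- Relations for `C_q = ℝ⟨x,y⟩/(x² − α, y² − β, xy + yx − q)`. -/
inductive CRel (α β q : ℝ) :
    FreeAlgebra ℝ (Fin 2) → FreeAlgebra ℝ (Fin 2) → Prop
  | xx : CRel α β q (ι ℝ 0 * ι ℝ 0) (algebraMap ℝ _ α)
  | yy : CRel α β q (ι ℝ 1 * ι ℝ 1) (algebraMap ℝ _ β)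
  | mix : CRel α β q (ι ℝ 0 * ι ℝ 1 + ι ℝ 1 * ι ℝ 0) (algebraMap ℝ _ q)

open Quaternion QuaternionAlgebra Matrix

noncomputable section

variable {α β q : ℝ} {A : Type*} [Ring A] [Algebra ℝ A]

/-- map out of the quotient -/
def toAlg (α β q : ℝ) (X Y : A) (hx : X * X = algebraMap ℝ A α)
    (hy : Y * Y = algebraMap ℝ A β) (hxy : X * Y + Y * X = algebraMap ℝ A q) :
    RingQuot (CRel α β q) →ₐ[ℝ] A :=
  RingQuot.liftAlgHom ℝ ⟨FreeAlgebra.lift ℝ ![X, Y], by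
    rintro _ _ ⟨⟩ <;> simp [hx, hy, hxy]⟩

@[simp] lemma toAlg_X (X Y : A) (hx : X * X = algebraMap ℝ A α)
    (hy : Y * Y = algebraMap ℝ A β) (hxy : X * Y + Y * X = algebraMap ℝ A q) :
    toAlg α β q X Y hx hy hxy (RingQuot.mkAlgHom ℝ (CRel α β q) (ι ℝ 0)) = X := by
  simp [toAlg]

@[simp] lemma toAlg_Y (X Y : A) (hx : X * X = algebraMap ℝ A α)
    (hy : Y * Y = algebraMap ℝ A β) (hxy : X * Y + Y * X = algebraMap ℝ A q) :
    toAlg α β q X Y hx hy hxy (RingQuot.mkAlgHom ℝ (CRel α β q) (ι ℝ 1)) = Y := by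
  simp [toAlg]

end

open FreeAlgebra Quaternion
section
variable {α β q : ℝ} {A : Type*} [Ring A] [Algebra ℝ A]

example (hα : α ≠ 0) : True := by
  trivial

-- relations in the quotient
example : True := trivial

end

noncomputable section
variable (α β q : ℝ) (hα : α ≠ 0)

abbrev Q' (α β q : ℝ) := RingQuot (CRel α β q)

def XX : Q' α β q := RingQuot.mkAlgHom ℝ (CRel α β q) (ι ℝ 0)
def YY : Q' α β q := RingQuot.mkAlgHom ℝ (CRel α β q) (ι ℝ 1)

lemma relX : XX α β q * XX α β q = algebraMap ℝ _ α := by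
  have := RingQuot.mkAlgHom_rel ℝ (CRel.xx (α := α) (β := β) (q := q))
  simpa [XX, _root_.map_mul] using this

lemma relY : YY α β q * YY α β q = algebraMap ℝ _ β := by
  have := RingQuot.mkAlgHom_rel ℝ (CRel.yy (α := α) (β := β) (q := q))
  simpa [YY, _root_.map_mul] using this

lemma relXY : XX α β q * YY α β q + YY α β q * XX α β q = algebraMap ℝ _ q := by
  have := RingQuot.mkAlgHom_rel ℝ (CRel.mix (α := α) (β := β) (q := q))
  simpa [XX, YY, _root_.map_mul, _root_.map_add] using this

end

open FreeAlgebra Quaternion QuaternionAlgebra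
noncomputable section
variable (α β q : ℝ)

def quotBasis (hα : α ≠ 0) :
    QuaternionAlgebra.Basis (Q' α β q) α 0 (β - q ^ 2 / (4 * α)) where
  i := XX α β q
  j := YY α β q - (q / (2 * α)) • XX α β q
  k := XX α β q * (YY α β q - (q / (2 * α)) • XX α β q)
  i_mul_i := by rw [relX, Algebra.algebraMap_eq_smul_one, zero_smul, add_zero]
  i_mul_j := rfl
  j_mul_j := by
    set X := XX α β q
    set Y := YY α β q
    set s := q / (2 * α)
    have expand : (Y - s • X) * (Y - s • X)
        = Y * Y - s • (X * Y + Y * X) + (s * s) • (X * X) := by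
      simp only [sub_mul, mul_sub, smul_mul_assoc, mul_smul_comm, smul_smul, smul_add,
        smul_sub]
      module
    rw [expand, relX, relY, relXY, Algebra.algebraMap_eq_smul_one,
      Algebra.algebraMap_eq_smul_one, Algebra.algebraMap_eq_smul_one]
    match_scalars <;> simp only [s] <;> field_simp <;> ring
  j_mul_i := by
    set X := XX α β q
    set Y := YY α β q
    set s := q / (2 * α)
    have key : (Y - s • X) * X + X * (Y - s • X) = 0 := by
      have expand : (Y - s • X) * X + X * (Y - s • X)
          = (X * Y + Y * X) - (2 * s) • (X * X) := by
        simp only [sub_mul, mul_sub, smul_mul_assoc, mul_smul_comm, smul_sub]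
        module
      rw [expand, relX, relXY, Algebra.algebraMap_eq_smul_one,
        Algebra.algebraMap_eq_smul_one]
      match_scalars <;> simp only [s] <;> field_simp <;> ring
    rw [zero_smul, zero_sub]
    exact eq_neg_of_add_eq_zero_left key
end

open FreeAlgebra Quaternion QuaternionAlgebra
noncomputable section
variable (α β q : ℝ)

lemma hyQ (hα : α ≠ 0) :
    ((⟨0, q / (2*α), 1, 0⟩ : ℍ[ℝ, α, β - q ^ 2 / (4 * α)]) * ⟨0, q / (2*α), 1, 0⟩)
      = algebraMap ℝ _ β := by
  ext <;> simp <;> field_simp <;> ring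

lemma hxyQ (hα : α ≠ 0) :
    ((⟨0, 1, 0, 0⟩ : ℍ[ℝ, α, β - q ^ 2 / (4 * α)]) * ⟨0, q / (2*α), 1, 0⟩
      + (⟨0, q / (2*α), 1, 0⟩ : ℍ[ℝ, α, β - q ^ 2 / (4 * α)]) * ⟨0, 1, 0, 0⟩)
      = algebraMap ℝ _ q := by
  ext <;> simp <;> field_simp <;> ring

lemma hxQ : ((⟨0, 1, 0, 0⟩ : ℍ[ℝ, α, β - q ^ 2 / (4 * α)]) * ⟨0, 1, 0, 0⟩)
      = algebraMap ℝ _ α := by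
  ext <;> simp

def quotToQA (hα : α ≠ 0) : Q' α β q →ₐ[ℝ] ℍ[ℝ, α, β - q ^ 2 / (4 * α)] :=
  toAlg α β q ⟨0, 1, 0, 0⟩ ⟨0, q / (2*α), 1, 0⟩ (hxQ α β q) (hyQ α β q hα) (hxyQ α β q hα)

def quotEquivQA (hα : α ≠ 0) : Q' α β q ≃ₐ[ℝ] ℍ[ℝ, α, β - q ^ 2 / (4 * α)] := by
  refine AlgEquiv.ofAlgHom (quotToQA α β q hα) ((quotBasis α β q hα).liftHom) ?_ ?_
  · ext : 1 <;>
      simp [quotToQA, quotBasis, Basis.liftHom, Basis.lift, XX, YY, map_sub, _root_.map_smul] <;>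
      (ext <;> simp)
  · refine RingQuot.ringQuot_ext' ℝ _ _ (FreeAlgebra.hom_ext (funext fun n => ?_))
    fin_cases n <;>
      simp [quotToQA, quotBasis, Basis.liftHom, Basis.lift, XX, YY]
end

open Quaternion QuaternionAlgebra
noncomputable section
variable (c₁ c₂ : ℝ)

def basisToQuat (u v : ℝ) (hu : u * u = -c₁) (hv : v * v = -c₂) : Basis ℍ[ℝ, -1, -1] c₁ 0 c₂ where
  i := ⟨0, u, 0, 0⟩
  j := ⟨0, 0, v, 0⟩
  k := ⟨0, 0, 0, u * v⟩
  i_mul_i := by ext <;> simp <;> linarith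
  j_mul_j := by ext <;> simp <;> linarith
  i_mul_j := by ext <;> simp
  j_mul_i := by ext <;> simp <;> ring
end
noncomputable section
variable (c₁ c₂ : ℝ)

def basisFromQuat (u v : ℝ) (hu : u * u = -c₁) (hv : v * v = -c₂)
    (hu0 : u ≠ 0) (hv0 : v ≠ 0) : Basis ℍ[ℝ, c₁, c₂] (-1 : ℝ) 0 (-1 : ℝ) where
  i := ⟨0, u⁻¹, 0, 0⟩
  j := ⟨0, 0, v⁻¹, 0⟩
  k := ⟨0, 0, 0, u⁻¹ * v⁻¹⟩
  i_mul_i := by ext <;> simp <;> field_simp <;> nlinarith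
  j_mul_j := by ext <;> simp <;> field_simp <;> nlinarith
  i_mul_j := by ext <;> simp
  j_mul_i := by ext <;> simp <;> ring

def qaEquivQuat (h₁ : c₁ < 0) (h₂ : c₂ < 0) : ℍ[ℝ, c₁, c₂] ≃ₐ[ℝ] ℍ[ℝ] := by
  have hu : Real.sqrt (-c₁) * Real.sqrt (-c₁) = -c₁ :=
    Real.mul_self_sqrt (by linarith)
  have hv : Real.sqrt (-c₂) * Real.sqrt (-c₂) = -c₂ :=
    Real.mul_self_sqrt (by linarith)
  have hu0 : Real.sqrt (-c₁) ≠ 0 := ne_of_gt (Real.sqrt_pos.2 (by linarith))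
  have hv0 : Real.sqrt (-c₂) ≠ 0 := ne_of_gt (Real.sqrt_pos.2 (by linarith))
  refine AlgEquiv.trans (A₂ := ℍ[ℝ, -1, -1]) (AlgEquiv.ofAlgHom
    ((basisToQuat c₁ c₂ _ _ hu hv).liftHom)
    ((basisFromQuat c₁ c₂ _ _ hu hv hu0 hv0).liftHom) ?_ ?_) AlgEquiv.refl
  · ext : 1 <;> simp [basisToQuat, basisFromQuat, Basis.liftHom, Basis.lift] <;>
      (try (ext <;> simp)) <;> field_simp
  · ext : 1 <;> simp [basisToQuat, basisFromQuat, Basis.liftHom, Basis.lift] <;>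
      (try (ext <;> simp)) <;> field_simp
end

open Quaternion QuaternionAlgebra Matrix
noncomputable section
variable (c₁ c₂ : ℝ)

def basisToMat (t : ℝ) (ht : t * t = c₂) : Basis (Matrix (Fin 2) (Fin 2) ℝ) c₁ 0 c₂ where
  i := !![0, c₁; 1, 0]
  j := !![t, 0; 0, -t]
  k := !![0, -(c₁*t); t, 0]
  i_mul_i := by
    ext i j
    fin_cases i <;> fin_cases j <;>
      simp [Matrix.mul_apply, Fin.sum_univ_two, Matrix.one_apply]
  j_mul_j := by
    ext i j
    fin_cases i <;> fin_cases j <;>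
      simp [Matrix.mul_apply, Fin.sum_univ_two, Matrix.one_apply, ht]
  i_mul_j := by
    ext i j
    fin_cases i <;> fin_cases j <;>
      simp [Matrix.mul_apply, Fin.sum_univ_two]
  j_mul_i := by
    ext i j
    fin_cases i <;> fin_cases j <;>
      simp [Matrix.mul_apply, Fin.sum_univ_two] <;> ring

lemma liftToMat_apply (t : ℝ) (ht : t * t = c₂) (x : ℍ[ℝ, c₁, c₂]) :
    (basisToMat c₁ c₂ t ht).liftHom x
      = !![x.re + x.imJ * t, x.imI * c₁ - x.imK * (c₁*t);
           x.imI + x.imK * t, x.re - x.imJ * t] := by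
  ext i j
  fin_cases i <;> fin_cases j <;>
    simp [Basis.liftHom, Basis.lift, basisToMat, Algebra.algebraMap_eq_smul_one,
      Matrix.one_apply] <;> ring

def qaEquivMatrix (h₁ : c₁ ≠ 0) (h₂ : 0 < c₂) :
    ℍ[ℝ, c₁, c₂] ≃ₐ[ℝ] Matrix (Fin 2) (Fin 2) ℝ := by
  have ht : Real.sqrt c₂ * Real.sqrt c₂ = c₂ := Real.mul_self_sqrt h₂.le
  have ht0 : Real.sqrt c₂ ≠ 0 := ne_of_gt (Real.sqrt_pos.2 h₂)
  set t := Real.sqrt c₂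
  set f := (basisToMat c₁ c₂ t ht).liftHom
  have hinj : Function.Injective f := by
    rw [injective_iff_map_eq_zero]
    intro x hx
    rw [liftToMat_apply] at hx
    have e00 := congrFun (congrFun hx 0) 0
    have e01 := congrFun (congrFun hx 0) 1
    have e10 := congrFun (congrFun hx 1) 0
    have e11 := congrFun (congrFun hx 1) 1
    simp at e00 e01 e10 e11
    have himJ : x.imJ = 0 := by
      have : x.imJ * t = 0 := by linarith
      rcases mul_eq_zero.1 this with h | h
      · exact h
      · exact absurd h ht0
    have hre : x.re = 0 := by nlinarith
    have himK : x.imK = 0 := by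
      have h1 : x.imI = -(x.imK * t) := by linarith
      have h2 : x.imI * c₁ - x.imK * (c₁ * t) = 0 := e01
      rw [h1] at h2
      have : x.imK * (c₁ * t) = 0 := by linarith
      rcases mul_eq_zero.1 this with h | h
      · exact h
      · exact absurd h (mul_ne_zero h₁ ht0)
    have himI : x.imI = 0 := by rw [himK] at e10; simpa using e10
    ext <;> simp [hre, himI, himJ, himK]
  have hsurj : Function.Surjective f := by
    have hdim : Module.finrank ℝ ℍ[ℝ, c₁, c₂] = Module.finrank ℝ (Matrix (Fin 2) (Fin 2) ℝ) := by
      rw [QuaternionAlgebra.finrank_eq_four, Module.finrank_matrix]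
      simp
    exact (LinearMap.injective_iff_surjective_of_finrank_eq_finrank
      (f := f.toLinearMap) hdim).1 hinj
  exact AlgEquiv.ofBijective f ⟨hinj, hsurj⟩
end

/-- For `k = ℝ` and `α, β < 0`: if `|q| > 2√(αβ)` then `C_q ≅ M₂(ℝ)`, and if
`|q| < 2√(αβ)` then `C_q ≅ ℍ`, Hamilton's quaternions. -/
theorem stmt16 (α β q : ℝ) (hα : α < 0) (hβ : β < 0) :
    (|q| > 2 * Real.sqrt (α * β) →
      Nonempty (RingQuot (CRel α β q) ≃ₐ[ℝ] Matrix (Fin 2) (Fin 2) ℝ)) ∧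
    (|q| < 2 * Real.sqrt (α * β) →
      Nonempty (RingQuot (CRel α β q) ≃ₐ[ℝ] Quaternion ℝ)) := by
  have hαβ : 0 < α * β := mul_pos_of_neg_of_neg hα hβ
  have hs := Real.sq_sqrt hαβ.le
  have hs0 := Real.sqrt_nonneg (α * β)
  have hα0 : α ≠ 0 := ne_of_lt hα
  have hc : (β - q ^ 2 / (4 * α)) * (4 * α) = 4 * (α * β) - q ^ 2 := by
    field_simp
  constructor
  · intro h
    have hq2 : 4 * (α * β) < q ^ 2 := by nlinarith [sq_abs q, abs_nonneg q]
    have hc2 : 0 < β - q ^ 2 / (4 * α) := by nlinarith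
    exact ⟨(quotEquivQA α β q hα0).trans
      (qaEquivMatrix α (β - q ^ 2 / (4 * α)) hα0 hc2)⟩
  · intro h
    have hq2 : q ^ 2 < 4 * (α * β) := by nlinarith [sq_abs q, abs_nonneg q]
    have hc2 : β - q ^ 2 / (4 * α) < 0 := by nlinarith
    exact ⟨(quotEquivQA α β q hα0).trans
      (qaEquivQuat α (β - q ^ 2 / (4 * α)) hα hc2)⟩
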